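/- Let q be a prime power, let m, k be integers with 2 ≤ k ≤ m, let s ∈ {1,...,m} with gcd(s,m)=1, and let α_1,...,α_t be nonzero elements of F_{q^m} with pairwise distinct norms. Let φ be the automorphism x ↦ x^{q^s} of F_{q^m} and φ^{-1} its inverse. For each i define the F_q-subspaces of (F_{q^m})^k: U_i^{-s} = {(x, N_{-s}^1(α_i)·φ^{-1}(x), ..., N_{-s}^{k-1}(α_i)·φ^{-(k-1)}(x)) : x ∈ F_{q^m}}, where N_{-s}^j(α) = ∏_{l=0}^{j-1} φ^{-l}(α), and U_i^{s} = {(x, N_s^1(β_i)·φ(x), ..., N_s^{k-1}(β_i)·φ^{k-1}(x)) : x ∈ F_{q^m}} with β_i = φ^{-(k-2)}(α_i^{-1}). Then the tuples (U_1^{-s},...,U_t^{-s}) and (U_1^{s},...,U_t^{s}) are equivalent. -/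

import Mathlib

open Pointwise

/-- The truncated norm with respect to an endomorphism `ψ`:
`∏_{l=0}^{j-1} ψ^l(α)` (so for `ψ = φ` this is `N_s^j(α)`, and for `ψ = φ⁻¹` it
is `N_{-s}^j(α)`). -/
def truncNormIter {L : Type*} [Field L] (ψ : L → L) (j : ℕ) (α : L) : L :=
  ∏ l ∈ Finset.range j, ψ^[l] α

/-- The norm `N_s(α) = ∏_{i=0}^{m-1} α^{q^{si}}`. -/
def normS (q s m : ℕ) {L : Type*} [Field L] (α : L) : L :=
  ∏ i ∈ Finset.range m, α ^ q ^ (s * i)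

/-- Equivalence of `t`-tuples of subsets of `(F_{q^m})^k`. -/
def sysEquiv {L : Type*} [Field L] {k t : ℕ} (U V : Fin t → Set (Fin k → L)) : Prop :=
  ∃ (A : (Fin k → L) ≃ₗ[L] (Fin k → L)) (γ : Fin t → L) (σ : Equiv.Perm (Fin t)),
    (∀ i, γ i ≠ 0) ∧ ∀ i, U i = γ i • (⇑A '' V (σ i))

section aux
variable {L : Type*} [Field L]

lemma iter_symm_apply (e : L ≃+* L) (a : ℕ) : ∀ y : L, (⇑e)^[a] ((⇑e.symm)^[a] y) = y := by
  induction a with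
  | zero => intro y; simp
  | succ n ih =>
      intro y
      rw [Function.iterate_succ_apply', Function.iterate_succ_apply, ih,
        RingEquiv.apply_symm_apply]

lemma iter_cancel (e : L ≃+* L) (a b : ℕ) (y : L) :
    (⇑e)^[a] ((⇑e.symm)^[a + b] y) = (⇑e.symm)^[b] y := by
  rw [Function.iterate_add_apply, iter_symm_apply]

lemma iter_inv (e : L ≃+* L) (a : ℕ) (x : L) : (⇑e)^[a] x⁻¹ = ((⇑e)^[a] x)⁻¹ := by
  induction a with
  | zero => simp
  | succ n ih =>
      rw [Function.iterate_succ_apply', Function.iterate_succ_apply', ih, map_inv₀]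

lemma iter_ne_zero (e : L ≃+* L) (a : ℕ) {x : L} (hx : x ≠ 0) : (⇑e)^[a] x ≠ 0 := by
  induction a with
  | zero => simpa
  | succ n ih =>
      rw [Function.iterate_succ_apply']
      simpa using ih

lemma key (e : L ≃+* L) {α : L} (hα : α ≠ 0) {n j : ℕ} (hj : j ≤ n) :
    truncNormIter (⇑e.symm) j α =
      truncNormIter (⇑e.symm) n α *
        truncNormIter (⇑e) (n - j) ((⇑e.symm)^[n - 1] α⁻¹) := by
  obtain ⟨d, rfl⟩ : ∃ d, n = j + d := ⟨n - j, by omega⟩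
  have h1 : truncNormIter (⇑e.symm) (j + d) α =
      truncNormIter (⇑e.symm) j α * ∏ l ∈ Finset.range d, (⇑e.symm)^[j + l] α := by
    simp [truncNormIter, Finset.prod_range_add]
  have h2 : truncNormIter (⇑e) (j + d - j) ((⇑e.symm)^[j + d - 1] α⁻¹) =
      (∏ l ∈ Finset.range d, (⇑e.symm)^[j + l] α)⁻¹ := by
    rw [Nat.add_sub_cancel_left, truncNormIter,
      ← Finset.prod_range_reflect (fun l => (⇑e.symm)^[j + l] α) d,
      ← Finset.prod_inv_distrib]
    refine Finset.prod_congr rfl fun l hl => ?_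
    have hl' : l < d := Finset.mem_range.mp hl
    have h3 : j + d - 1 = l + (j + (d - 1 - l)) := by omega
    rw [h3, iter_cancel, iter_inv]
  have hP : (∏ l ∈ Finset.range d, (⇑e.symm)^[j + l] α) ≠ 0 :=
    Finset.prod_ne_zero_iff.mpr fun l _ => iter_ne_zero _ _ hα
  rw [h1, h2, mul_assoc, mul_inv_cancel₀ hP, mul_one]

end aux

/-- the linearized Reed–Solomon system with parameter `-s` determined by
`(α_1,…,α_t)` is equivalent to the one with parameter `s` determined by
`(φ^{-(k-2)}(α_1⁻¹),…,φ^{-(k-2)}(α_t⁻¹))`, where `φ : x ↦ x^{q^s}`. -/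
theorem stmt5 (q m k s t : ℕ) (hq : IsPrimePow q) (hk2 : 2 ≤ k) (hkm : k ≤ m)
    (hs1 : 1 ≤ s) (hsm' : s ≤ m) (hsm : Nat.gcd s m = 1)
    (K L : Type*) [Field K] [Fintype K] [Field L] [Fintype L] [Algebra K L]
    (hcardK : Fintype.card K = q) (hrank : Module.finrank K L = m)
    (φ : L ≃+* L) (hφ : ∀ x : L, φ x = x ^ q ^ s)
    (α : Fin t → L) (hα : ∀ i, α i ≠ 0)
    (hαinj : Function.Injective fun i => normS q s m (α i)) :
    sysEquiv
      (fun i => Set.range fun x : L => fun j : Fin k =>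
        truncNormIter (⇑φ.symm) (j : ℕ) (α i) * (⇑φ.symm)^[(j : ℕ)] x)
      (fun i => Set.range fun x : L => fun j : Fin k =>
        truncNormIter (⇑φ) (j : ℕ) ((⇑φ.symm)^[k - 2] (α i)⁻¹) * (⇑φ)^[(j : ℕ)] x) := by
  classical
  set A : (Fin k → L) ≃ₗ[L] (Fin k → L) :=
    LinearEquiv.funCongrLeft L L (Fin.revPerm : Equiv.Perm (Fin k)) with hA
  refine ⟨A, fun i => truncNormIter (⇑φ.symm) (k - 1) (α i), 1, fun i => ?_, fun i => ?_⟩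
  · exact Finset.prod_ne_zero_iff.mpr fun l _ => iter_ne_zero _ _ (hα i)
  · set γ : L := truncNormIter (⇑φ.symm) (k - 1) (α i) with hγ
    set g : L → (Fin k → L) := fun x : L => fun j : Fin k =>
      truncNormIter (⇑φ) (j : ℕ) ((⇑φ.symm)^[k - 2] (α i)⁻¹) * (⇑φ)^[(j : ℕ)] x with hg
    have hsurj : Function.Surjective ((⇑φ.symm)^[k - 1] : L → L) :=
      ((φ.symm).bijective.iterate (k - 1)).surjective
    have hfun : (fun x : L => fun j : Fin k =>
        truncNormIter (⇑φ.symm) (j : ℕ) (α i) * (⇑φ.symm)^[(j : ℕ)] x) =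
        (fun y : L => γ • A (g y)) ∘ ((⇑φ.symm)^[k - 1]) := by
      funext x
      funext j
      have hjk : (j : ℕ) ≤ k - 1 := by omega
      have hrev : ((Fin.rev j : Fin k) : ℕ) = k - 1 - (j : ℕ) := by
        rw [Fin.val_rev]; omega
      have hAg : (A (g ((⇑φ.symm)^[k - 1] x))) j = g ((⇑φ.symm)^[k - 1] x) (Fin.rev j) := by
        simp [hA, LinearEquiv.funCongrLeft]
      have hiter : (⇑φ)^[k - 1 - (j : ℕ)] ((⇑φ.symm)^[k - 1] x) = (⇑φ.symm)^[(j : ℕ)] x := by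
        have : k - 1 = (k - 1 - (j : ℕ)) + (j : ℕ) := by omega
        rw [this, Nat.add_sub_cancel, iter_cancel]
      have hscal := key φ (hα i) hjk
      have hk12 : k - 1 - 1 = k - 2 := by omega
      rw [hk12] at hscal
      simp only [Function.comp_apply, Pi.smul_apply, smul_eq_mul]
      rw [hAg]
      simp only [Function.comp_apply, Pi.smul_apply, smul_eq_mul, hAg, hg, hrev, hiter]
      rw [hscal]
      ring
    calc (Set.range fun x : L => fun j : Fin k =>
            truncNormIter (⇑φ.symm) (j : ℕ) (α i) * (⇑φ.symm)^[(j : ℕ)] x)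
        = Set.range ((fun y : L => γ • A (g y)) ∘ ((⇑φ.symm)^[k - 1])) := by rw [hfun]
      _ = Set.range (fun y : L => γ • A (g y)) := hsurj.range_comp _
      _ = γ • Set.range (fun y : L => A (g y)) := (Set.smul_set_range γ _).symm
      _ = γ • (⇑A '' Set.range g) := by rw [← Set.range_comp]; rfl
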